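/- Let g₁ : ℝ → ℝ be continuous and strictly increasing on [0, ∞), and let g₂ : ℝ → ℝ be continuous on [0, ∞), strictly increasing on [0, m] and strictly decreasing on [m, ∞) for some m > 0. If g₂(0) < g₁(0), then g(x) = min(g₁(x), g₂(x)) has exactly one local maximum on [0, ∞) in the sense that there exists x* such that g is non-decreasing on [0, x*] and non-increasing on [x*, ∞), whenever g₁ and g₂ cross in exactly two points A < B with A < m < B. -/
import Mathlib


open Set

theorem stmt_4 (g₁ g₂ : ℝ → ℝ) (m A B : ℝ)
    (hm : 0 < m)
    (hc₁ : ContinuousOn g₁ (Ici 0)) (hmono₁ : StrictMonoOn g₁ (Ici 0))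
    (hc₂ : ContinuousOn g₂ (Ici 0))
    (hmono₂ : StrictMonoOn g₂ (Icc 0 m)) (hanti₂ : StrictAntiOn g₂ (Ici m))
    (h0 : g₂ 0 < g₁ 0)
    (hcross : {x : ℝ | 0 ≤ x ∧ g₁ x = g₂ x} = {A, B})
    (hAB : A < B) (hAm : A < m) (hmB : m < B) :
    ∃ x : ℝ, 0 ≤ x ∧
      MonotoneOn (fun y => min (g₁ y) (g₂ y)) (Icc 0 x) ∧
      AntitoneOn (fun y => min (g₁ y) (g₂ y)) (Ici x) := by
  have hzero : ∀ x : ℝ, 0 ≤ x → g₁ x = g₂ x → x = A ∨ x = B := by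
    intro x hx hxe
    have : x ∈ ({A, B} : Set ℝ) := by rw [← hcross]; exact ⟨hx, hxe⟩
    simpa using this
  have hAmem : A ∈ {x : ℝ | 0 ≤ x ∧ g₁ x = g₂ x} := by
    rw [hcross]; exact Or.inl rfl
  have hBmem : B ∈ {x : ℝ | 0 ≤ x ∧ g₁ x = g₂ x} := by
    rw [hcross]; exact Or.inr rfl
  obtain ⟨hA0, hgA⟩ := hAmem
  obtain ⟨hB0, hgB⟩ := hBmem
  have hch : ContinuousOn (fun x => g₁ x - g₂ x) (Ici 0) := hc₁.sub hc₂
  -- g₂ < g₁ strictly before A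
  have F1 : ∀ x : ℝ, 0 ≤ x → x < A → g₂ x < g₁ x := by
    intro x hx hxA
    by_contra hcon
    push_neg at hcon
    have hcont : ContinuousOn (fun t => g₁ t - g₂ t) (Icc 0 x) :=
      hch.mono (fun z hz => hz.1)
    have h0mem : (0:ℝ) ∈ Icc (g₁ x - g₂ x) (g₁ 0 - g₂ 0) :=
      ⟨by linarith, by linarith⟩
    obtain ⟨c, hc, hc0⟩ := intermediate_value_Icc' hx hcont h0mem
    have hce : g₁ c = g₂ c := by linarith [show g₁ c - g₂ c = 0 from hc0]
    rcases hzero c hc.1 hce with rfl | rfl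
    · linarith [hc.2]
    · linarith [hc.2]
  -- g₂ < g₁ strictly after B
  have F2 : ∀ x : ℝ, B < x → g₂ x < g₁ x := by
    intro x hx
    have h1 : g₂ x < g₂ B := hanti₂ (le_of_lt hmB) (le_trans (le_of_lt hmB) (le_of_lt hx)) hx
    have h2 : g₁ B < g₁ x := hmono₁ hB0 (le_trans hB0 (le_of_lt hx)) hx
    linarith [hgB]
  -- no sign change on (A,B)
  have hivt : ∀ x y : ℝ, A < x → x < B → A < y → y < B →
      g₁ x - g₂ x ≤ 0 → 0 ≤ g₁ y - g₂ y → False := by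
    intro x y hx1 hx2 hy1 hy2 hhx hhy
    have hsub : uIcc x y ⊆ Ici (0:ℝ) := by
      intro z hz
      rcases Set.mem_uIcc.1 hz with ⟨h1, h2⟩ | ⟨h1, h2⟩ <;>
        simp only [mem_Ici] <;> linarith
    have hcont : ContinuousOn (fun t => g₁ t - g₂ t) (uIcc x y) := hch.mono hsub
    have h0mem : (0:ℝ) ∈ uIcc (g₁ x - g₂ x) (g₁ y - g₂ y) :=
      Set.mem_uIcc.2 (Or.inl ⟨hhx, hhy⟩)
    obtain ⟨c, hc, hc0⟩ := intermediate_value_uIcc hcont h0mem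
    have hcA : A < c ∧ c < B := by
      rcases Set.mem_uIcc.1 hc with ⟨h1, h2⟩ | ⟨h1, h2⟩ <;> constructor <;> linarith
    have hce : g₁ c = g₂ c := by linarith [show g₁ c - g₂ c = 0 from hc0]
    rcases hzero c (by linarith [hcA.1]) hce with rfl | rfl
    · exact absurd hcA.1 (lt_irrefl _)
    · exact absurd hcA.2 (lt_irrefl _)
  have hmne : g₁ m ≠ g₂ m := by
    intro he
    rcases hzero m (le_of_lt hm) he with rfl | rfl
    · exact absurd hAm (lt_irrefl _)
    · exact absurd hmB (lt_irrefl _)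
  rcases lt_or_gt_of_ne hmne with hcase | hcase
  · -- Case: g₁ m < g₂ m, so g₁ < g₂ on (A,B); peak at B
    have F3 : ∀ x : ℝ, A < x → x < B → g₁ x < g₂ x := by
      intro x hx1 hx2
      by_contra hcon
      push_neg at hcon
      exact hivt m x hAm hmB hx1 hx2 (by linarith) (by linarith)
    have hlow : ∀ x : ℝ, 0 ≤ x → x ≤ A → g₂ x ≤ g₁ x := by
      intro x hx hxA
      rcases eq_or_lt_of_le hxA with rfl | h
      · exact le_of_eq hgA.symm
      · exact le_of_lt (F1 x hx h)
    have hmid : ∀ x : ℝ, A ≤ x → x ≤ B → g₁ x ≤ g₂ x := by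
      intro x h1 h2
      rcases eq_or_lt_of_le h1 with rfl | h1
      · exact le_of_eq hgA
      · rcases eq_or_lt_of_le h2 with rfl | h2
        · exact le_of_eq hgB
        · exact le_of_lt (F3 x h1 h2)
    have hhigh : ∀ x : ℝ, B ≤ x → g₂ x ≤ g₁ x := by
      intro x hx
      rcases eq_or_lt_of_le hx with rfl | h
      · exact le_of_eq hgB.symm
      · exact le_of_lt (F2 x h)
    refine ⟨B, hB0, ?_, ?_⟩
    · intro x hx y hy hxy
      simp only
      rcases le_total y A with hyA | hyA
      · rw [min_eq_right (hlow x hx.1 (le_trans hxy hyA)),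
            min_eq_right (hlow y hy.1 hyA)]
        exact (hmono₂.monotoneOn) ⟨hx.1, by linarith⟩ ⟨hy.1, by linarith⟩ hxy
      · rcases le_total x A with hxA | hxA
        · rw [min_eq_right (hlow x hx.1 hxA), min_eq_left (hmid y hyA hy.2)]
          calc g₂ x ≤ g₂ A := (hmono₂.monotoneOn) ⟨hx.1, by linarith⟩ ⟨hA0, by linarith⟩ hxA
            _ = g₁ A := hgA.symm
            _ ≤ g₁ y := (hmono₁.monotoneOn) hA0 (le_trans hA0 hyA) hyA
        · rw [min_eq_left (hmid x hxA hx.2), min_eq_left (hmid y hyA hy.2)]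
          exact (hmono₁.monotoneOn) hx.1 hy.1 hxy
    · intro x hx y hy hxy
      simp only
      rw [min_eq_right (hhigh x hx), min_eq_right (hhigh y hy)]
      exact (hanti₂.antitoneOn) (le_trans (le_of_lt hmB) hx) (le_trans (le_of_lt hmB) hy) hxy
  · -- Case: g₂ m < g₁ m, so g₂ < g₁ everywhere; peak at m
    have F4 : ∀ x : ℝ, A < x → x < B → g₂ x < g₁ x := by
      intro x hx1 hx2
      by_contra hcon
      push_neg at hcon
      exact hivt x m hx1 hx2 hAm hmB (by linarith) (by linarith)
    have hall : ∀ x : ℝ, 0 ≤ x → g₂ x ≤ g₁ x := by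
      intro x hx
      rcases lt_trichotomy x A with h | rfl | h
      · exact le_of_lt (F1 x hx h)
      · exact le_of_eq hgA.symm
      · rcases lt_trichotomy x B with h2 | rfl | h2
        · exact le_of_lt (F4 x h h2)
        · exact le_of_eq hgB.symm
        · exact le_of_lt (F2 x h2)
    refine ⟨m, le_of_lt hm, ?_, ?_⟩
    · intro x hx y hy hxy
      simp only
      rw [min_eq_right (hall x hx.1), min_eq_right (hall y hy.1)]
      exact (hmono₂.monotoneOn) hx hy hxy
    · intro x hx y hy hxy
      simp only
      rw [min_eq_right (hall x (le_trans (le_of_lt hm) hx)),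
          min_eq_right (hall y (le_trans (le_of_lt hm) hy))]
      exact (hanti₂.antitoneOn) hx hy hxy
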